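/- Define B(n; k_0, k_1, …, k_m) = #{p ∈ PK(n) : luck(p) = k_0, ω_1(p) = k_1, and ω_j(p) = k_j − 1 for each 2 ≤ j ≤ m}. Then for every n ≥ 1 and all tuples (k_0, …, k_m) and (l_0, …, l_m) of positive integers with k_0 + ⋯ + k_m = l_0 + ⋯ + l_m, one has B(n; k_0, …, k_m) = B(n; l_0, …, l_m); that is, the joint distribution of lucky cars and of the numbers of cars preferring nodes 1, …, m of the m-caterpillar depends only on n and on the sum of the statistics. -/

import Mathlib

open scoped Classical
open Finset

noncomputable section

/-- The set of positive nondecreasing sequences of length `n` bounded above by `b` is finite. -/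
lemma boundedSeq_finite (n : ℕ) (b : ℕ → ℕ) :
    {p : Fin n → ℕ | Monotone p ∧ ∀ i : Fin n, 1 ≤ p i ∧ p i ≤ b i}.Finite := by
  have h : {p : Fin n → ℕ | Monotone p ∧ ∀ i : Fin n, 1 ≤ p i ∧ p i ≤ b i} ⊆
      Set.pi Set.univ (fun i : Fin n => Set.Iic (b i)) := by
    intro p hp
    rw [Set.mem_pi]
    intro i _
    exact (hp.2 i).2
  exact (Set.Finite.pi fun i : Fin n => Set.finite_Iic (b (i : ℕ))).subset h

/-- The finset of nondecreasing sequences `p : Fin n → ℕ` of positive integers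
with `p i ≤ b i` for all `i`. -/
def BSeq (n : ℕ) (b : ℕ → ℕ) : Finset (Fin n → ℕ) := (boundedSeq_finite n b).toFinset

/-- `PK m n` : the u-parking distributions of length `n`, i.e. nondecreasing sequences
of positive integers with `p i ≤ m*(i-1)+1` (here indexed from `0`, so `p i ≤ m*i+1`). -/
def PK (m n : ℕ) : Finset (Fin n → ℕ) := BSeq n (fun i => m * i + 1)

/-- `luck p` : the number of indices `i` with `p i = m*(i-1)+1` (0-indexed: `m*i+1`). -/
def luck (m : ℕ) {n : ℕ} (p : Fin n → ℕ) : ℕ :=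
  (Finset.univ.filter (fun i : Fin n => p i = m * (i : ℕ) + 1)).card

/-- `freq j p` = `ω_j(p)` : the number of indices `i` with `p i = j`. -/
def freq (j : ℕ) {n : ℕ} (p : Fin n → ℕ) : ℕ :=
  (Finset.univ.filter (fun i : Fin n => p i = j)).card

/-- `hcnt m n k r` = `h_{n,k,r}` : the number of nondecreasing sequences of positive
integers with `p_i ≤ m*(i+k-1) - r` for `1 ≤ i ≤ n` (0-indexed: `p i ≤ m*(i+k) - r`). -/
def hcnt (m n k r : ℕ) : ℕ := (BSeq n (fun i => m * (i + k) - r)).card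

/-- `Cnt m n k` = `C_{n,k}` : the number of `p ∈ PK m n` with `luck p = k`. -/
def Cnt (m n k : ℕ) : ℕ := ((PK m n).filter (fun p => luck m p = k)).card

/-- `Rpoly m n` = `R_n(q) = Σ_k C_{n,k} q^k ∈ ℤ[q]`. -/
def Rpoly (m n : ℕ) : Polynomial ℤ :=
  ∑ k ∈ Finset.range (n + 1), (Cnt m n k : Polynomial ℤ) * Polynomial.X ^ k

/-- `hfull t k` : the complete homogeneous symmetric polynomial of degree `k`
in variables `q_0, …, q_{t-1}`, i.e. the sum of all monomials of total degree `k`. -/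
def hfull (t k : ℕ) : MvPolynomial (Fin t) ℤ :=
  ∑ α ∈ Finset.Nat.antidiagonalTuple t k, ∏ i : Fin t, MvPolynomial.X i ^ α i

/-- `ffix m p ℓ` = `i_ℓ(p)` : the first fixed point of type `ℓ`, the smallest `k` with
`2 ≤ k ≤ n` and `p_k ≥ m*(k-2)+1+ℓ` (1-indexed), or `n+1` if there is none. -/
def ffix (m : ℕ) {n : ℕ} (p : Fin n → ℕ) (ℓ : ℕ) : ℕ :=
  sInf ({k | 2 ≤ k ∧ ∃ i : Fin n, (i : ℕ) + 1 = k ∧ m * (k - 2) + 1 + ℓ ≤ p i} ∪ {n + 1})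

/-- The extended first fixed points: `i_0 = 2`, `i_{m+1} = n+1`, and `i_ℓ = ffix m p ℓ`
for `1 ≤ ℓ ≤ m`. -/
def ffixE (m : ℕ) {n : ℕ} (p : Fin n → ℕ) (j : ℕ) : ℕ :=
  if j = 0 then 2 else if j = m + 1 then n + 1 else ffix m p j

/-- `pget p k` = `p_k` (1-indexed), `0` out of range. -/
def pget {n : ℕ} (p : Fin n → ℕ) (k : ℕ) : ℕ := if h : k - 1 < n then p ⟨k - 1, h⟩ else 0

/-- The `(ℓ+1)`-st part `P_{ℓ+1}` (for `0 ≤ ℓ ≤ m`) of the first-return decomposition of `p`: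
the list `(p_k - (p_{i_ℓ} - 1))` for `i_ℓ ≤ k ≤ i_{ℓ+1} - 1`. -/
def FRD (m : ℕ) {n : ℕ} (p : Fin n → ℕ) (ℓ : ℕ) : List ℕ :=
  (List.range (ffixE m p (ℓ + 1) - ffixE m p ℓ)).map
    (fun t => pget p (ffixE m p ℓ + t) - (pget p (ffixE m p ℓ) - 1))

/-- A list is a u-parking distribution: nondecreasing, with `l.get i ∈ [1, m*i+1]`
(0-indexed). -/
def isPKlist (m : ℕ) (l : List ℕ) : Prop :=
  l.Pairwise (· ≤ ·) ∧ ∀ i : Fin l.length, 1 ≤ l.get i ∧ l.get i ≤ m * (i : ℕ) + 1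

/-- `θ(p)` : the nondecreasing rearrangement of the concatenation of `p` with the list of
all `j ∈ {1, …, m*n-m+1}` with `j ≢ 1 (mod m)`. -/
def theta (m n : ℕ) (p : Fin n → ℕ) : List ℕ :=
  Multiset.sort
    ((List.ofFn p : Multiset ℕ) +
      (((List.range (m * n - m + 1)).map (· + 1)).filter
        (fun j => ¬ j ≡ 1 [MOD m]) : List ℕ)) (· ≤ ·)

/-- Parking distributions on the `m`-caterpillar of length `n`, as nondecreasing lists. -/
def PKcat (m n : ℕ) : Set (List ℕ) :=
  {a | a.length = m * n - m + 1 ∧ a.Pairwise (· ≤ ·) ∧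
       (∀ x ∈ a, 1 ≤ x ∧ x ≤ m * n - m + 1) ∧
       (∀ i : ℕ, 1 ≤ i → i ≤ n →
         m * (i - 1) + 1 ≤ (a.filter (fun x => x ≤ m * (i - 1) + 1)).length) ∧
       (∀ j : ℕ, 1 ≤ j → j ≤ m * n - m + 1 → ¬ j ≡ 1 [MOD m] → j ∈ a)}

/-! ### Auxiliary machinery for stmt18 -/

lemma mem_PK {m n : ℕ} {p : Fin n → ℕ} :
    p ∈ PK m n ↔ Monotone p ∧ ∀ i : Fin n, 1 ≤ p i ∧ p i ≤ m * (i : ℕ) + 1 := by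
  unfold PK BSeq
  rw [Set.Finite.mem_toFinset]
  rfl

/-- last occurrence of value `j` -/
def lastOcc (n j : ℕ) (p : Fin n → ℕ) : ℕ := sSup {i | ∃ h : i < n, p ⟨i, h⟩ = j}

/-- insertion position for the new lucky value, given `a` (start search at `a`) -/
def insQ (m n : ℕ) (p : Fin n → ℕ) (a : ℕ) : ℕ :=
  sInf {i | a ≤ i ∧ (i + 1 = n ∨ ∃ h : i + 1 < n, m * i + 1 ≤ p ⟨i + 1, h⟩)}

/-- first index whose value exceeds `j` (or `n`) -/
def lowEnd (n j : ℕ) (p : Fin n → ℕ) : ℕ :=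
  sInf {i | i = n ∨ ∃ h : i < n, j < p ⟨i, h⟩}

/-- first lucky index `≥ 1` -/
def fLucky (m n : ℕ) (p : Fin n → ℕ) : ℕ :=
  sInf {i | 1 ≤ i ∧ ∃ h : i < n, p ⟨i, h⟩ = m * i + 1}

def Phi (m n j : ℕ) (p : Fin n → ℕ) : Fin n → ℕ := fun i =>
  if (i : ℕ) < lastOcc n j p then p i
  else if (i : ℕ) < insQ m n p (lastOcc n j p) then
    (if h2 : (i : ℕ) + 1 < n then p ⟨(i : ℕ) + 1, h2⟩ else p i)
  else if (i : ℕ) = insQ m n p (lastOcc n j p) then m * insQ m n p (lastOcc n j p) + 1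
  else p i

def Psi (m n j : ℕ) (p : Fin n → ℕ) : Fin n → ℕ := fun i =>
  if (i : ℕ) < lowEnd n j p then p i
  else if (i : ℕ) = lowEnd n j p then j
  else if (i : ℕ) ≤ fLucky m n p then
    p ⟨(i : ℕ) - 1, lt_of_le_of_lt (Nat.sub_le _ _) i.isLt⟩
  else p i

def cycF (n a d : ℕ) (hd : d < n) (ha : a ≤ d) : Fin n → Fin n := fun i =>
  if h : a ≤ (i : ℕ) ∧ (i : ℕ) < d then ⟨(i : ℕ) + 1, by omega⟩
  else if (i : ℕ) = d then ⟨a, by omega⟩ else i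

def cycG (n a d : ℕ) (hd : d < n) (ha : a ≤ d) : Fin n → Fin n := fun i =>
  if (i : ℕ) = a then ⟨d, hd⟩
  else if h : a < (i : ℕ) ∧ (i : ℕ) ≤ d then ⟨(i : ℕ) - 1, by omega⟩ else i

lemma cycGF (n a d : ℕ) (hd : d < n) (ha : a ≤ d) (i : Fin n) :
    cycG n a d hd ha (cycF n a d hd ha i) = i := by
  unfold cycF cycG
  by_cases h1 : a ≤ (i : ℕ) ∧ (i : ℕ) < d
  · rw [dif_pos h1]
    have : ((⟨(i : ℕ) + 1, by omega⟩ : Fin n) : ℕ) = (i : ℕ) + 1 := rfl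
    rw [if_neg (by omega), dif_pos (by constructor <;> omega)]
    apply Fin.ext; simp
  · rw [dif_neg h1]
    by_cases h2 : (i : ℕ) = d
    · rw [if_pos h2]
      have hv : ((⟨a, by omega⟩ : Fin n) : ℕ) = a := rfl
      by_cases h3 : a = d
      · rw [if_pos (by omega)]; apply Fin.ext; simp [hv]; omega
      · rw [if_pos rfl]  -- (⟨a,_⟩ : ℕ) = a is rfl
        apply Fin.ext; simp [hv]; omega
    · rw [if_neg h2, if_neg (by omega), dif_neg (by omega)]

lemma cycFG (n a d : ℕ) (hd : d < n) (ha : a ≤ d) (i : Fin n) :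
    cycF n a d hd ha (cycG n a d hd ha i) = i := by
  unfold cycF cycG
  by_cases h1 : (i : ℕ) = a
  · rw [if_pos h1]
    have hv : ((⟨d, hd⟩ : Fin n) : ℕ) = d := rfl
    by_cases h3 : a = d
    · rw [dif_neg (by omega), if_pos (by omega)]; apply Fin.ext; simp [hv]; omega
    · rw [dif_neg (by omega), if_pos rfl]; apply Fin.ext; simp; omega
  · rw [if_neg h1]
    by_cases h2 : a < (i : ℕ) ∧ (i : ℕ) ≤ d
    · rw [dif_pos h2]
      have hv : ((⟨(i : ℕ) - 1, by omega⟩ : Fin n) : ℕ) = (i : ℕ) - 1 := rfl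
      rw [dif_pos (by constructor <;> omega)]
      apply Fin.ext; simp; omega
    · rw [dif_neg h2, dif_neg (by omega), if_neg (by omega)]

lemma freq_comp {n : ℕ} (q : Fin n → ℕ) (f g : Fin n → Fin n)
    (hgf : ∀ i, g (f i) = i) (hfg : ∀ i, f (g i) = i) (c : ℕ) :
    freq c (fun i => q (f i)) = freq c q := by
  unfold freq
  apply Finset.card_bij' (fun i _ => f i) (fun i _ => g i)
  · intro a ha
    simp only [Finset.mem_filter, Finset.mem_univ, true_and] at ha ⊢
    exact ha
  · intro a ha
    simp only [Finset.mem_filter, Finset.mem_univ, true_and] at ha ⊢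
    rw [hfg]; exact ha
  · intro a _; exact hgf a
  · intro a _; exact hfg a

lemma freq_update_of_ne {n : ℕ} (p : Fin n → ℕ) (i₀ : Fin n) (v c : ℕ)
    (h1 : p i₀ ≠ c) (h2 : v ≠ c) :
    freq c (Function.update p i₀ v) = freq c p := by
  unfold freq
  congr 1
  apply Finset.filter_congr
  intro i _
  rcases eq_or_ne i i₀ with h | h
  · subst h; simp [Function.update_self, h1, h2]
  · simp [Function.update_of_ne h]

lemma freq_update_old {n : ℕ} (p : Fin n → ℕ) (i₀ : Fin n) (v c : ℕ)
    (h1 : p i₀ = c) (h2 : v ≠ c) :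
    freq c (Function.update p i₀ v) + 1 = freq c p := by
  unfold freq
  have hmem : i₀ ∈ Finset.univ.filter (fun i => p i = c) := by simp [h1]
  have : Finset.univ.filter (fun i => Function.update p i₀ v i = c)
      = (Finset.univ.filter (fun i => p i = c)).erase i₀ := by
    ext i
    simp only [Finset.mem_filter, Finset.mem_univ, true_and, Finset.mem_erase]
    rcases eq_or_ne i i₀ with h | h
    · subst h; simp [Function.update_self, h2]
    · simp [Function.update_of_ne h, h]
  rw [this, Finset.card_erase_of_mem hmem]
  have := Finset.card_pos.mpr ⟨i₀, hmem⟩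
  omega

lemma freq_update_new {n : ℕ} (p : Fin n → ℕ) (i₀ : Fin n) (v c : ℕ)
    (h1 : p i₀ ≠ c) (h2 : v = c) :
    freq c (Function.update p i₀ v) = freq c p + 1 := by
  unfold freq
  have hmem : i₀ ∉ Finset.univ.filter (fun i => p i = c) := by simp [h1]
  have : Finset.univ.filter (fun i => Function.update p i₀ v i = c)
      = insert i₀ (Finset.univ.filter (fun i => p i = c)) := by
    ext i
    simp only [Finset.mem_filter, Finset.mem_univ, true_and, Finset.mem_insert]
    rcases eq_or_ne i i₀ with h | h
    · subst h; simp [Function.update_self, h2]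
    · simp [Function.update_of_ne h, h]
  rw [this, Finset.card_insert_of_notMem hmem]

lemma phi_spec (m n j : ℕ) (hm : 1 ≤ m) (hj1 : 1 ≤ j) (hjm : j ≤ m)
    (p : Fin n → ℕ) (hmono : Monotone p) (hbd : ∀ i : Fin n, 1 ≤ p i ∧ p i ≤ m * (i : ℕ) + 1)
    (hfr : 1 ≤ freq j p) (hge : 2 ≤ freq j p ∨ 2 ≤ j) :
    Monotone (Phi m n j p) ∧ (∀ i : Fin n, 1 ≤ Phi m n j p i ∧ Phi m n j p i ≤ m * (i : ℕ) + 1)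
    ∧ luck m (Phi m n j p) = luck m p + 1
    ∧ freq j (Phi m n j p) + 1 = freq j p
    ∧ (∀ c, c ≠ j → c ≤ m → freq c (Phi m n j p) = freq c p)
    ∧ Psi m n j (Phi m n j p) = p := by
  have hpmono : ∀ u v : Fin n, (u : ℕ) ≤ (v : ℕ) → p u ≤ p v := fun u v h => hmono (by exact h)
  have hm1 : ∀ x, 1 ≤ x → m + 1 ≤ m * x + 1 := by
    intro x hx
    have : m * 1 ≤ m * x := Nat.mul_le_mul_left m hx
    omega
  have hmm : ∀ x y : ℕ, x ≤ y → m * x ≤ m * y := fun x y h => Nat.mul_le_mul_left m h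
  set a := lastOcc n j p with hadef
  set d := insQ m n p a with hddef
  -- facts about a
  have hfr' : (Finset.univ.filter (fun i : Fin n => p i = j)).Nonempty := by
    rw [← Finset.card_pos]
    unfold freq at hfr
    omega
  obtain ⟨w0, hw0⟩ := hfr'
  simp only [Finset.mem_filter, Finset.mem_univ, true_and] at hw0
  have hSne : {i | ∃ h : i < n, p ⟨i, h⟩ = j}.Nonempty := ⟨(w0 : ℕ), w0.isLt, hw0⟩
  have hbddS : BddAbove {i | ∃ h : i < n, p ⟨i, h⟩ = j} := by
    refine ⟨n, fun x hx => ?_⟩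
    obtain ⟨h, _⟩ := hx
    omega
  have haS : ∃ h : a < n, p ⟨a, h⟩ = j := by
    rw [hadef]
    exact Nat.sSup_mem hSne hbddS
  obtain ⟨han, haj⟩ := haS
  have hamax : ∀ x (hx : x < n), p ⟨x, hx⟩ = j → x ≤ a := by
    intro x hx hxj
    rw [hadef]
    exact le_csSup hbddS ⟨hx, hxj⟩
  have hn : 0 < n := by omega
  have hp0 : p ⟨0, hn⟩ = 1 := by
    have h2 := (hbd ⟨0, hn⟩).2
    have h1 := (hbd ⟨0, hn⟩).1
    simp only [Fin.val_mk] at h2 ⊢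
    omega
  have ha1 : 1 ≤ a := by
    rcases hge with hge | hge
    · unfold freq at hge
      obtain ⟨x, hx, y, hy, hxy⟩ := Finset.one_lt_card.mp hge
      simp only [Finset.mem_filter, Finset.mem_univ, true_and] at hx hy
      by_contra hcon
      push_neg at hcon
      have hx' : (x : ℕ) ≤ a := hamax (x : ℕ) x.isLt hx
      have hy' : (y : ℕ) ≤ a := hamax (y : ℕ) y.isLt hy
      exact hxy (Fin.ext (by omega))
    · by_contra hcon
      push_neg at hcon
      have he : (⟨0, hn⟩ : Fin n) = ⟨a, han⟩ := Fin.ext (show (0:ℕ) = a by omega)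
      rw [he, haj] at hp0
      omega
  have hlejF : ∀ i : Fin n, (i : ℕ) ≤ a → p i ≤ j := by
    intro i hi
    have := hpmono i ⟨a, han⟩ hi
    omega
  have hgtjF : ∀ i : Fin n, a < (i : ℕ) → j < p i := by
    intro i hi
    have h1 : p ⟨a, han⟩ ≤ p i := hpmono ⟨a, han⟩ i (show a ≤ (i : ℕ) by omega)
    rcases eq_or_lt_of_le h1 with he | hl
    · exfalso
      have : (i : ℕ) ≤ a := hamax (i : ℕ) i.isLt (by rw [← he, haj])
      omega
    · omega
  -- facts about d
  have hdtop : (n - 1) ∈ {i | a ≤ i ∧ (i + 1 = n ∨ ∃ h : i + 1 < n, m * i + 1 ≤ p ⟨i + 1, h⟩)} :=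
    ⟨by omega, Or.inl (by omega)⟩
  have hdmemS : d ∈ {i | a ≤ i ∧ (i + 1 = n ∨ ∃ h : i + 1 < n, m * i + 1 ≤ p ⟨i + 1, h⟩)} := by
    rw [hddef]
    exact Nat.sInf_mem ⟨n - 1, hdtop⟩
  obtain ⟨had, hdc⟩ := hdmemS
  have hdle : d ≤ n - 1 := by
    rw [hddef]
    exact Nat.sInf_le hdtop
  have hdn : d < n := by omega
  have hdmin : ∀ x, a ≤ x → x < d → ∀ hx1 : x + 1 < n, p ⟨x + 1, hx1⟩ < m * x + 1 := by
    intro x hax hxd hx1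
    by_contra hcon
    push_neg at hcon
    have hmem : x ∈ {i | a ≤ i ∧ (i + 1 = n ∨ ∃ h : i + 1 < n, m * i + 1 ≤ p ⟨i + 1, h⟩)} :=
      ⟨hax, Or.inr ⟨hx1, hcon⟩⟩
    have h2 : d ≤ x := by
      rw [hddef]
      exact Nat.sInf_le hmem
    omega
  -- region lemmas
  have hR1 : ∀ (i : Fin n), (i : ℕ) < a → Phi m n j p i = p i := by
    intro i hi
    simp only [Phi]
    rw [← hadef, if_pos hi]
  have hR2 : ∀ (i : Fin n) (hx1 : (i : ℕ) + 1 < n), a ≤ (i : ℕ) → (i : ℕ) < d →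
      Phi m n j p i = p ⟨(i : ℕ) + 1, hx1⟩ := by
    intro i hx1 hai hid
    simp only [Phi]
    rw [← hadef, ← hddef, if_neg (by omega), if_pos hid, dif_pos hx1]
  have hR3 : ∀ (i : Fin n), (i : ℕ) = d → Phi m n j p i = m * d + 1 := by
    intro i hi
    simp only [Phi]
    rw [← hadef, ← hddef, if_neg (by omega), if_neg (by omega), if_pos hi]
  have hR4 : ∀ (i : Fin n), d < (i : ℕ) → Phi m n j p i = p i := by
    intro i hi
    simp only [Phi]
    rw [← hadef, ← hddef, if_neg (by omega), if_neg (by omega), if_neg (by omega)]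
  -- monotonicity
  have hmono' : Monotone (Phi m n j p) := by
    intro x y hxy
    have hxy' : (x : ℕ) ≤ (y : ℕ) := hxy
    rcases lt_or_ge (y : ℕ) a with hy1 | hy1
    · rw [hR1 x (by omega), hR1 y hy1]
      exact hpmono x y hxy'
    rcases lt_or_ge (y : ℕ) d with hy2 | hy2
    · have hyn : (y : ℕ) + 1 < n := by omega
      rw [hR2 y hyn hy1 hy2]
      rcases lt_or_ge (x : ℕ) a with hx1 | hx1
      · rw [hR1 x hx1]
        exact hpmono x ⟨(y : ℕ) + 1, hyn⟩ (show (x : ℕ) ≤ (y : ℕ) + 1 by omega)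
      · rw [hR2 x (by omega) hx1 (by omega)]
        exact hpmono _ _ (by simp only [Fin.val_mk]; omega)
    rcases eq_or_lt_of_le hy2 with hy3 | hy3
    · rw [hR3 y hy3.symm]
      rcases lt_or_ge (x : ℕ) a with hx1 | hx1
      · rw [hR1 x hx1]
        have h1 := hlejF x (by omega)
        have h2 := hm1 d (by omega)
        omega
      rcases lt_or_ge (x : ℕ) d with hx2 | hx2
      · have hxn : (x : ℕ) + 1 < n := by omega
        rw [hR2 x hxn hx1 hx2]
        have h1 := hdmin (x : ℕ) hx1 hx2 hxn
        have h2 := hmm (x : ℕ) d (by omega)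
        omega
      · rw [hR3 x (by omega)]
    · rw [hR4 y hy3]
      have hdy : m * d + 1 ≤ p y := by
        rcases hdc with hc | ⟨h1, hc⟩
        · exfalso
          have := y.isLt
          omega
        · calc m * d + 1 ≤ p ⟨d + 1, h1⟩ := hc
            _ ≤ p y := hpmono _ _ (by simp only [Fin.val_mk]; omega)
      rcases lt_or_ge (x : ℕ) a with hx1 | hx1
      · rw [hR1 x hx1]
        exact hpmono x y hxy'
      rcases lt_or_ge (x : ℕ) d with hx2 | hx2
      · rw [hR2 x (by omega) hx1 hx2]
        exact hpmono _ _ (by simp only [Fin.val_mk]; omega)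
      rcases eq_or_lt_of_le hx2 with hx3 | hx3
      · rw [hR3 x hx3.symm]
        exact hdy
      · rw [hR4 x hx3]
        exact hpmono x y hxy'
  -- bounds
  have hbd' : ∀ i : Fin n, 1 ≤ Phi m n j p i ∧ Phi m n j p i ≤ m * (i : ℕ) + 1 := by
    intro i
    rcases lt_or_ge (i : ℕ) a with h1 | h1
    · rw [hR1 i h1]
      exact hbd i
    rcases lt_or_ge (i : ℕ) d with h2 | h2
    · have hx1 : (i : ℕ) + 1 < n := by omega
      rw [hR2 i hx1 h1 h2]
      refine ⟨(hbd _).1, ?_⟩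
      have := hdmin (i : ℕ) h1 h2 hx1
      omega
    rcases eq_or_lt_of_le h2 with h3 | h3
    · rw [hR3 i h3.symm]
      constructor
      · omega
      · rw [← h3]
    · rw [hR4 i h3]
      exact hbd i
  -- no lucky indices in [1, d] for p
  have hnoluckF : ∀ i : Fin n, 1 ≤ (i : ℕ) → (i : ℕ) ≤ d → p i ≠ m * (i : ℕ) + 1 := by
    intro i h1 h2
    rcases le_or_gt (i : ℕ) a with hia | hia
    · have hle := hlejF i hia
      have h3 := hm1 (i : ℕ) h1
      omega
    · have hx1 : ((i : ℕ) - 1) + 1 < n := by have := i.isLt; omega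
      have hlt := hdmin ((i : ℕ) - 1) (by omega) (by omega) hx1
      have heq : (⟨(i : ℕ) - 1 + 1, hx1⟩ : Fin n) = i := Fin.ext (by
        simp only [Fin.val_mk]; omega)
      rw [heq] at hlt
      have hmul : m * ((i : ℕ) - 1) + m = m * (i : ℕ) := by
        have h4 : (i : ℕ) - 1 + 1 = (i : ℕ) := by omega
        calc m * ((i : ℕ) - 1) + m = m * ((i : ℕ) - 1 + 1) := by ring
          _ = m * (i : ℕ) := by rw [h4]
      omega
  -- lucky set of Phi
  have hLuck' : ∀ i : Fin n, (Phi m n j p i = m * (i : ℕ) + 1 ↔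
      (i = (⟨d, hdn⟩ : Fin n) ∨ p i = m * (i : ℕ) + 1)) := by
    intro i
    rcases lt_or_ge (i : ℕ) a with h1 | h1
    · rw [hR1 i h1]
      constructor
      · intro h; right; exact h
      · rintro (h | h)
        · exfalso
          have := congrArg Fin.val h
          simp only [Fin.val_mk] at this
          omega
        · exact h
    rcases lt_or_ge (i : ℕ) d with h2 | h2
    · have hx1 : (i : ℕ) + 1 < n := by omega
      rw [hR2 i hx1 h1 h2]
      have hlt := hdmin (i : ℕ) h1 h2 hx1
      constructor
      · intro h; exfalso; omega
      · rintro (h | h)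
        · exfalso
          have := congrArg Fin.val h
          simp only [Fin.val_mk] at this
          omega
        · exact absurd h (hnoluckF i (by omega) (by omega))
    rcases eq_or_lt_of_le h2 with h3 | h3
    · rw [hR3 i h3.symm]
      constructor
      · intro _; left; exact Fin.ext (by simp only [Fin.val_mk]; omega)
      · intro _; rw [← h3]
    · rw [hR4 i h3]
      constructor
      · intro h; right; exact h
      · rintro (h | h)
        · exfalso
          have := congrArg Fin.val h
          simp only [Fin.val_mk] at this
          omega
        · exact h
  have hLuck : Finset.univ.filter (fun i : Fin n => Phi m n j p i = m * (i : ℕ) + 1)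
      = insert (⟨d, hdn⟩ : Fin n) (Finset.univ.filter (fun i : Fin n => p i = m * (i : ℕ) + 1)) := by
    ext i
    simp only [Finset.mem_filter, Finset.mem_univ, true_and, Finset.mem_insert]
    exact hLuck' i
  have hdnotm : (⟨d, hdn⟩ : Fin n) ∉ Finset.univ.filter (fun i : Fin n => p i = m * (i : ℕ) + 1) := by
    simp only [Finset.mem_filter, Finset.mem_univ, true_and]
    exact hnoluckF ⟨d, hdn⟩ (show 1 ≤ d by omega) (show d ≤ d from le_refl d)
  have hluck' : luck m (Phi m n j p) = luck m p + 1 := by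
    unfold luck
    rw [hLuck, Finset.card_insert_of_notMem hdnotm]
  -- freq via factorization
  have hfact : Phi m n j p
      = fun i => Function.update p ⟨a, han⟩ (m * d + 1) (cycF n a d hdn had i) := by
    funext i
    simp only [cycF]
    rcases lt_or_ge (i : ℕ) a with h1 | h1
    · rw [hR1 i h1, dif_neg (by omega), if_neg (by omega), Function.update_apply,
        if_neg (by intro hcon; have := congrArg Fin.val hcon; simp only [Fin.val_mk] at this; omega)]
    rcases lt_or_ge (i : ℕ) d with h2 | h2
    · have hx1 : (i : ℕ) + 1 < n := by omega
      rw [hR2 i hx1 h1 h2, dif_pos ⟨h1, h2⟩, Function.update_apply,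
        if_neg (by intro hcon; have := congrArg Fin.val hcon; simp only [Fin.val_mk] at this; omega)]
    rcases eq_or_lt_of_le h2 with h3 | h3
    · rw [hR3 i h3.symm, dif_neg (by omega), if_pos h3.symm, Function.update_apply,
        if_pos (Fin.ext (by simp only [Fin.val_mk]))]
    · rw [hR4 i h3, dif_neg (by omega), if_neg (by omega), Function.update_apply,
        if_neg (by intro hcon; have := congrArg Fin.val hcon; simp only [Fin.val_mk] at this; omega)]
  have hfreqc : ∀ c, freq c (Phi m n j p) = freq c (Function.update p ⟨a, han⟩ (m * d + 1)) := by
    intro c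
    rw [hfact]
    exact freq_comp _ (cycF n a d hdn had) (cycG n a d hdn had)
      (cycGF n a d hdn had) (cycFG n a d hdn had) c
  have hvne : ∀ c, c ≤ m → m * d + 1 ≠ c := by
    intro c hc
    have := hm1 d (by omega)
    omega
  have hfreqj : freq j (Phi m n j p) + 1 = freq j p := by
    rw [hfreqc j]
    exact freq_update_old p ⟨a, han⟩ (m * d + 1) j haj (hvne j hjm)
  have hfreqo : ∀ c, c ≠ j → c ≤ m → freq c (Phi m n j p) = freq c p := by
    intro c hcj hcm
    rw [hfreqc c]
    exact freq_update_of_ne p ⟨a, han⟩ (m * d + 1) c (by rw [haj]; exact (Ne.symm hcj)) (hvne c hcm)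
  -- composite
  have hlow : lowEnd n j (Phi m n j p) = a := by
    have hmem : a ∈ {i | i = n ∨ ∃ h : i < n, j < Phi m n j p ⟨i, h⟩} := by
      have hval : j < Phi m n j p ⟨a, han⟩ := by
        rcases eq_or_lt_of_le had with h3 | h3
        · rw [hR3 ⟨a, han⟩ (by simp only [Fin.val_mk]; omega)]
          have := hm1 d (by omega)
          omega
        · have hx1 : a + 1 < n := by omega
          rw [hR2 ⟨a, han⟩ (by simp only [Fin.val_mk]; omega) (le_refl a)
            (by simp only [Fin.val_mk]; omega)]
          exact hgtjF _ (by simp only [Fin.val_mk]; omega)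
      exact Or.inr ⟨han, hval⟩
    have hmin : ∀ x, x < a → x ∉ {i | i = n ∨ ∃ h : i < n, j < Phi m n j p ⟨i, h⟩} := by
      intro x hx hcon
      rcases hcon with h | ⟨hxn, hgt⟩
      · omega
      · rw [hR1 ⟨x, hxn⟩ (by simp only [Fin.val_mk]; omega)] at hgt
        have := hlejF ⟨x, hxn⟩ (by simp only [Fin.val_mk]; omega)
        omega
    apply le_antisymm (Nat.sInf_le hmem)
    by_contra hcon
    push_neg at hcon
    exact hmin _ hcon (Nat.sInf_mem ⟨a, hmem⟩)
  have hflk : fLucky m n (Phi m n j p) = d := by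
    have hmem : d ∈ {i | 1 ≤ i ∧ ∃ h : i < n, Phi m n j p ⟨i, h⟩ = m * i + 1} := by
      have hval : Phi m n j p ⟨d, hdn⟩ = m * d + 1 := hR3 ⟨d, hdn⟩ rfl
      exact ⟨by omega, hdn, hval⟩
    have hmin : ∀ x, x < d → x ∉ {i | 1 ≤ i ∧ ∃ h : i < n, Phi m n j p ⟨i, h⟩ = m * i + 1} := by
      intro x hx hcon
      obtain ⟨hx1, hxn, hxl⟩ := hcon
      rw [hLuck' ⟨x, hxn⟩] at hxl
      rcases hxl with h | h
      · have := congrArg Fin.val h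
        simp only [Fin.val_mk] at this
        omega
      · exact hnoluckF ⟨x, hxn⟩ (by simp only [Fin.val_mk]; omega)
          (by simp only [Fin.val_mk]; omega) h
    apply le_antisymm (Nat.sInf_le hmem)
    by_contra hcon
    push_neg at hcon
    exact hmin _ hcon (Nat.sInf_mem ⟨d, hmem⟩)
  have hcomp : Psi m n j (Phi m n j p) = p := by
    funext i
    simp only [Psi]
    rw [hlow, hflk]
    rcases lt_or_ge (i : ℕ) a with h1 | h1
    · rw [if_pos h1]
      exact hR1 i h1
    rcases eq_or_lt_of_le h1 with h2 | h2
    · rw [if_neg (by omega), if_pos h2.symm]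
      have he : i = (⟨a, han⟩ : Fin n) := Fin.ext h2.symm
      rw [he, haj]
    rcases le_or_gt (i : ℕ) d with h3 | h3
    · rw [if_neg (by omega), if_neg (by omega), if_pos h3]
      have hx1 : ((i : ℕ) - 1) + 1 < n := by have := i.isLt; omega
      have hr := hR2 ⟨(i : ℕ) - 1, by omega⟩ (by simp only [Fin.val_mk]; exact hx1)
        (by simp only [Fin.val_mk]; omega) (by simp only [Fin.val_mk]; omega)
      have he : (⟨(i : ℕ) - 1 + 1, hx1⟩ : Fin n) = i := Fin.ext (by simp only [Fin.val_mk]; omega)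
      calc Phi m n j p ⟨(i : ℕ) - 1, lt_of_le_of_lt (Nat.sub_le _ _) i.isLt⟩
          = p ⟨(i : ℕ) - 1 + 1, hx1⟩ := hr
        _ = p i := by rw [he]
    · rw [if_neg (by omega), if_neg (by omega), if_neg (by omega)]
      exact hR4 i h3
  exact ⟨hmono', hbd', hluck', hfreqj, hfreqo, hcomp⟩

lemma psi_spec (m n j : ℕ) (hm : 1 ≤ m) (hj1 : 1 ≤ j) (hjm : j ≤ m)
    (p : Fin n → ℕ) (hmono : Monotone p) (hbd : ∀ i : Fin n, 1 ≤ p i ∧ p i ≤ m * (i : ℕ) + 1)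
    (hl : 2 ≤ luck m p) :
    Monotone (Psi m n j p) ∧ (∀ i : Fin n, 1 ≤ Psi m n j p i ∧ Psi m n j p i ≤ m * (i : ℕ) + 1)
    ∧ luck m (Psi m n j p) + 1 = luck m p
    ∧ freq j (Psi m n j p) = freq j p + 1
    ∧ (∀ c, c ≠ j → c ≤ m → freq c (Psi m n j p) = freq c p)
    ∧ Phi m n j (Psi m n j p) = p := by
  have hpmono : ∀ u v : Fin n, (u : ℕ) ≤ (v : ℕ) → p u ≤ p v := fun u v h => hmono (by exact h)
  have hm1 : ∀ x, 1 ≤ x → m + 1 ≤ m * x + 1 := by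
    intro x hx
    have : m * 1 ≤ m * x := Nat.mul_le_mul_left m hx
    omega
  have hmm : ∀ x y : ℕ, x ≤ y → m * x ≤ m * y := fun x y h => Nat.mul_le_mul_left m h
  set e := lowEnd n j p with hedef
  set i0 := fLucky m n p with hidef
  -- two distinct lucky indices
  unfold luck at hl
  obtain ⟨x, hx, y, hy, hxy⟩ := Finset.one_lt_card.mp hl
  simp only [Finset.mem_filter, Finset.mem_univ, true_and] at hx hy
  have hn : 0 < n := x.pos
  have hp0 : p ⟨0, hn⟩ = 1 := by
    have h2 := (hbd ⟨0, hn⟩).2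
    have h1 := (hbd ⟨0, hn⟩).1
    simp only [Fin.val_mk] at h2
    omega
  have hLne : {i | 1 ≤ i ∧ ∃ h : i < n, p ⟨i, h⟩ = m * i + 1}.Nonempty := by
    rcases Nat.eq_zero_or_pos (x : ℕ) with h0 | h0
    · refine ⟨(y : ℕ), ⟨?_, y.isLt, hy⟩⟩
      by_contra hcon
      push_neg at hcon
      exact hxy (Fin.ext (by omega)).symm
    · exact ⟨(x : ℕ), h0, x.isLt, hx⟩
  have hi0mem : i0 ∈ {i | 1 ≤ i ∧ ∃ h : i < n, p ⟨i, h⟩ = m * i + 1} := by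
    rw [hidef]
    exact Nat.sInf_mem hLne
  obtain ⟨hi01, hi0n, hi0l⟩ := hi0mem
  have hi0min : ∀ z, 1 ≤ z → z < i0 → ∀ h : z < n, p ⟨z, h⟩ ≠ m * z + 1 := by
    intro z h1 h2 hzn hcon
    have hmem : z ∈ {i | 1 ≤ i ∧ ∃ h : i < n, p ⟨i, h⟩ = m * i + 1} := ⟨h1, hzn, hcon⟩
    have : i0 ≤ z := by
      rw [hidef]
      exact Nat.sInf_le hmem
    omega
  -- facts about e
  have heSetne : {i | i = n ∨ ∃ h : i < n, j < p ⟨i, h⟩}.Nonempty := ⟨n, Or.inl rfl⟩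
  have hemem : e ∈ {i | i = n ∨ ∃ h : i < n, j < p ⟨i, h⟩} := by
    rw [hedef]
    exact Nat.sInf_mem heSetne
  have hemin : ∀ z, z < e → ∀ h : z < n, p ⟨z, h⟩ ≤ j := by
    intro z hze hzn
    by_contra hcon
    push_neg at hcon
    have hmem : z ∈ {i | i = n ∨ ∃ h : i < n, j < p ⟨i, h⟩} := Or.inr ⟨hzn, hcon⟩
    have : e ≤ z := by
      rw [hedef]
      exact Nat.sInf_le hmem
    omega
  have he1 : 1 ≤ e := by
    by_contra hcon
    push_neg at hcon
    rcases hemem with h | ⟨hen, hgt⟩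
    · omega
    · have he0 : (⟨e, hen⟩ : Fin n) = ⟨0, hn⟩ := Fin.ext (show e = 0 by omega)
      rw [he0, hp0] at hgt
      omega
  have hei0 : e ≤ i0 := by
    have hmem : i0 ∈ {i | i = n ∨ ∃ h : i < n, j < p ⟨i, h⟩} := by
      refine Or.inr ⟨hi0n, ?_⟩
      rw [hi0l]
      have := hm1 i0 hi01
      omega
    rw [hedef]
    exact Nat.sInf_le hmem
  have hen : e < n := by omega
  have hegt : j < p ⟨e, hen⟩ := by
    rcases hemem with h | ⟨h1, h2⟩
    · omega
    · exact h2
  have hgtF : ∀ i : Fin n, e ≤ (i : ℕ) → j < p i :=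
    fun i h => lt_of_lt_of_le hegt (hpmono ⟨e, hen⟩ i h)
  have hleF : ∀ i : Fin n, (i : ℕ) < e → p i ≤ j := fun i h => hemin (i : ℕ) h i.isLt
  -- region lemmas
  have hQ1 : ∀ (i : Fin n), (i : ℕ) < e → Psi m n j p i = p i := by
    intro i hi
    simp only [Psi]
    rw [← hedef, if_pos hi]
  have hQ2 : ∀ (i : Fin n), (i : ℕ) = e → Psi m n j p i = j := by
    intro i hi
    simp only [Psi]
    rw [← hedef, if_neg (by omega), if_pos hi]
  have hQ3 : ∀ (i : Fin n) (hx : (i : ℕ) - 1 < n), e < (i : ℕ) → (i : ℕ) ≤ i0 →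
      Psi m n j p i = p ⟨(i : ℕ) - 1, hx⟩ := by
    intro i hx hi1 hi2
    simp only [Psi]
    rw [← hedef, ← hidef, if_neg (by omega), if_neg (by omega), if_pos hi2]
  have hQ4 : ∀ (i : Fin n), i0 < (i : ℕ) → Psi m n j p i = p i := by
    intro i hi
    simp only [Psi]
    rw [← hedef, ← hidef, if_neg (by omega), if_neg (by omega), if_neg (by omega)]
  -- monotone
  have hmono' : Monotone (Psi m n j p) := by
    intro u v huv
    have huv' : (u : ℕ) ≤ (v : ℕ) := huv
    rcases lt_or_ge (v : ℕ) e with hv1 | hv1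
    · rw [hQ1 u (by omega), hQ1 v hv1]
      exact hpmono u v huv'
    rcases eq_or_lt_of_le hv1 with hv2 | hv2
    · -- v = e
      rw [hQ2 v hv2.symm]
      rcases lt_or_ge (u : ℕ) e with hu1 | hu1
      · rw [hQ1 u hu1]
        exact hleF u hu1
      · rw [hQ2 u (by omega)]
    rcases le_or_gt (v : ℕ) i0 with hv3 | hv3
    · -- e < v ≤ i0
      have hvx : (v : ℕ) - 1 < n := by omega
      rw [hQ3 v hvx hv2 hv3]
      rcases lt_or_ge (u : ℕ) e with hu1 | hu1
      · rw [hQ1 u hu1]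
        exact hpmono u ⟨(v : ℕ) - 1, hvx⟩ (show (u : ℕ) ≤ (v : ℕ) - 1 by omega)
      rcases eq_or_lt_of_le hu1 with hu2 | hu2
      · rw [hQ2 u hu2.symm]
        have := hgtF ⟨(v : ℕ) - 1, hvx⟩ (show e ≤ (v : ℕ) - 1 by omega)
        omega
      · rw [hQ3 u (by omega) hu2 (by omega)]
        exact hpmono _ _ (show (u : ℕ) - 1 ≤ (v : ℕ) - 1 by omega)
    · -- i0 < v
      rw [hQ4 v hv3]
      rcases lt_or_ge (u : ℕ) e with hu1 | hu1
      · rw [hQ1 u hu1]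
        exact hpmono u v huv'
      rcases eq_or_lt_of_le hu1 with hu2 | hu2
      · rw [hQ2 u hu2.symm]
        have := hgtF v (by omega)
        omega
      rcases le_or_gt (u : ℕ) i0 with hu3 | hu3
      · rw [hQ3 u (by omega) hu2 hu3]
        exact hpmono _ _ (show (u : ℕ) - 1 ≤ (v : ℕ) by omega)
      · rw [hQ4 u hu3]
        exact hpmono u v huv'
  -- bounds
  have hbd' : ∀ i : Fin n, 1 ≤ Psi m n j p i ∧ Psi m n j p i ≤ m * (i : ℕ) + 1 := by
    intro i
    rcases lt_or_ge (i : ℕ) e with h1 | h1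
    · rw [hQ1 i h1]
      exact hbd i
    rcases eq_or_lt_of_le h1 with h2 | h2
    · rw [hQ2 i h2.symm]
      have := hm1 (i : ℕ) (by omega)
      omega
    rcases le_or_gt (i : ℕ) i0 with h3 | h3
    · have hx : (i : ℕ) - 1 < n := by omega
      rw [hQ3 i hx h2 h3]
      have hb := hbd ⟨(i : ℕ) - 1, hx⟩
      simp only [Fin.val_mk] at hb
      have := hmm ((i : ℕ) - 1) (i : ℕ) (by omega)
      omega
    · rw [hQ4 i h3]
      exact hbd i
  -- lucky set
  have hL' : ∀ i : Fin n, (Psi m n j p i = m * (i : ℕ) + 1 ↔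
      (i ≠ (⟨i0, hi0n⟩ : Fin n) ∧ p i = m * (i : ℕ) + 1)) := by
    intro i
    rcases lt_or_ge (i : ℕ) e with h1 | h1
    · rw [hQ1 i h1]
      constructor
      · intro h
        refine ⟨?_, h⟩
        intro hcon
        have := congrArg Fin.val hcon
        simp only [Fin.val_mk] at this
        omega
      · exact fun h => h.2
    rcases eq_or_lt_of_le h1 with h2 | h2
    · rw [hQ2 i h2.symm]
      have hje : j ≠ m * (i : ℕ) + 1 := by
        have := hm1 (i : ℕ) (by omega)
        omega
      constructor
      · intro h; exact absurd h hje
      · rintro ⟨hne, h⟩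
        exfalso
        rcases eq_or_lt_of_le (show e ≤ i0 from hei0) with he2 | he2
        · exact hne (Fin.ext (show (i : ℕ) = i0 by omega))
        · exact hi0min (i : ℕ) (by omega) (by omega) i.isLt h
    rcases le_or_gt (i : ℕ) i0 with h3 | h3
    · have hx : (i : ℕ) - 1 < n := by omega
      rw [hQ3 i hx h2 h3]
      have hb := hbd ⟨(i : ℕ) - 1, hx⟩
      simp only [Fin.val_mk] at hb
      have hmu : m * ((i : ℕ) - 1) + m = m * (i : ℕ) := by
        have h4 : (i : ℕ) - 1 + 1 = (i : ℕ) := by omega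
        calc m * ((i : ℕ) - 1) + m = m * ((i : ℕ) - 1 + 1) := by ring
          _ = m * (i : ℕ) := by rw [h4]
      constructor
      · intro h; exfalso; omega
      · rintro ⟨hne, h⟩
        exfalso
        rcases eq_or_lt_of_le h3 with h4 | h4
        · exact hne (Fin.ext (show (i : ℕ) = i0 by omega))
        · exact hi0min (i : ℕ) (by omega) h4 i.isLt h
    · rw [hQ4 i h3]
      constructor
      · intro h
        refine ⟨?_, h⟩
        intro hcon
        have := congrArg Fin.val hcon
        simp only [Fin.val_mk] at this
        omega
      · exact fun h => h.2
  have hLuck : Finset.univ.filter (fun i : Fin n => Psi m n j p i = m * (i : ℕ) + 1)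
      = (Finset.univ.filter (fun i : Fin n => p i = m * (i : ℕ) + 1)).erase ⟨i0, hi0n⟩ := by
    ext i
    simp only [Finset.mem_filter, Finset.mem_univ, true_and, Finset.mem_erase]
    exact hL' i
  have hi0f : (⟨i0, hi0n⟩ : Fin n) ∈ Finset.univ.filter (fun i : Fin n => p i = m * (i : ℕ) + 1) := by
    simp only [Finset.mem_filter, Finset.mem_univ, true_and]
    exact hi0l
  have hluck' : luck m (Psi m n j p) + 1 = luck m p := by
    unfold luck
    rw [hLuck, Finset.card_erase_of_mem hi0f]
    have := Finset.card_pos.mpr ⟨_, hi0f⟩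
    omega
  -- freq
  have hfact : Psi m n j p
      = fun i => Function.update p ⟨i0, hi0n⟩ j (cycG n e i0 hi0n hei0 i) := by
    funext i
    simp only [cycG]
    rcases lt_or_ge (i : ℕ) e with h1 | h1
    · rw [hQ1 i h1, if_neg (by omega), dif_neg (by omega), Function.update_apply,
        if_neg (by intro hcon; have := congrArg Fin.val hcon; simp only [Fin.val_mk] at this; omega)]
    rcases eq_or_lt_of_le h1 with h2 | h2
    · rw [hQ2 i h2.symm, if_pos h2.symm, Function.update_apply,
        if_pos (Fin.ext (by simp only [Fin.val_mk]))]
    rcases le_or_gt (i : ℕ) i0 with h3 | h3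
    · have hx : (i : ℕ) - 1 < n := by omega
      rw [hQ3 i hx h2 h3, if_neg (by omega), dif_pos ⟨h2, h3⟩, Function.update_apply,
        if_neg (by intro hcon; have := congrArg Fin.val hcon; simp only [Fin.val_mk] at this; omega)]
    · rw [hQ4 i h3, if_neg (by omega), dif_neg (by omega), Function.update_apply,
        if_neg (by intro hcon; have := congrArg Fin.val hcon; simp only [Fin.val_mk] at this; omega)]
  have hfreqc : ∀ c, freq c (Psi m n j p) = freq c (Function.update p ⟨i0, hi0n⟩ j) := by
    intro c
    rw [hfact]
    exact freq_comp _ (cycG n e i0 hi0n hei0) (cycF n e i0 hi0n hei0)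
      (cycFG n e i0 hi0n hei0) (cycGF n e i0 hi0n hei0) c
  have hi0ne : ∀ c, c ≤ m → p ⟨i0, hi0n⟩ ≠ c := by
    intro c hc
    rw [hi0l]
    have := hm1 i0 hi01
    omega
  have hfreqj : freq j (Psi m n j p) = freq j p + 1 := by
    rw [hfreqc j]
    exact freq_update_new p ⟨i0, hi0n⟩ j j (hi0ne j hjm) rfl
  have hfreqo : ∀ c, c ≠ j → c ≤ m → freq c (Psi m n j p) = freq c p := by
    intro c hcj hcm
    rw [hfreqc c]
    exact freq_update_of_ne p ⟨i0, hi0n⟩ j c (hi0ne c hcm) (Ne.symm hcj)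
  -- composite
  have hlast : lastOcc n j (Psi m n j p) = e := by
    have hbdd : BddAbove {z | ∃ h : z < n, Psi m n j p ⟨z, h⟩ = j} := by
      refine ⟨n, fun z hz => ?_⟩
      obtain ⟨h, _⟩ := hz
      omega
    have hmem : e ∈ {z | ∃ h : z < n, Psi m n j p ⟨z, h⟩ = j} :=
      ⟨hen, hQ2 ⟨e, hen⟩ rfl⟩
    have hmax : ∀ z ∈ {z | ∃ h : z < n, Psi m n j p ⟨z, h⟩ = j}, z ≤ e := by
      rintro z ⟨hzn, hzj⟩
      by_contra hcon
      push_neg at hcon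
      rcases le_or_gt z i0 with h3 | h3
      · have hz1 : z - 1 < n := by omega
        rw [hQ3 ⟨z, hzn⟩ hz1 (by exact hcon) (by exact h3)] at hzj
        simp only [Fin.val_mk] at hzj
        have := hgtF ⟨z - 1, hz1⟩ (show e ≤ z - 1 by omega)
        omega
      · rw [hQ4 ⟨z, hzn⟩ (by exact h3)] at hzj
        have := hgtF ⟨z, hzn⟩ (show e ≤ z by omega)
        omega
    exact le_antisymm (csSup_le ⟨e, hmem⟩ hmax) (le_csSup hbdd hmem)
  have hinsq : insQ m n (Psi m n j p) e = i0 := by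
    have hmem : i0 ∈ {z | e ≤ z ∧ (z + 1 = n ∨
        ∃ h : z + 1 < n, m * z + 1 ≤ Psi m n j p ⟨z + 1, h⟩)} := by
      refine ⟨hei0, ?_⟩
      rcases eq_or_lt_of_le (show i0 + 1 ≤ n by omega) with h4 | h4
      · exact Or.inl h4
      · refine Or.inr ⟨h4, ?_⟩
        rw [hQ4 ⟨i0 + 1, h4⟩ (by simp only [Fin.val_mk]; omega)]
        have := hpmono ⟨i0, hi0n⟩ ⟨i0 + 1, h4⟩ (show i0 ≤ i0 + 1 by omega)
        omega
    have hmin : ∀ z, z < i0 → z ∉ {z | e ≤ z ∧ (z + 1 = n ∨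
        ∃ h : z + 1 < n, m * z + 1 ≤ Psi m n j p ⟨z + 1, h⟩)} := by
      rintro z hz ⟨hez, hc⟩
      rcases hc with h4 | ⟨h4, h5⟩
      · omega
      · rw [hQ3 ⟨z + 1, h4⟩ (show z + 1 - 1 < n by omega) (by simp only [Fin.val_mk]; omega)
          (by simp only [Fin.val_mk]; omega)] at h5
        have heq : (⟨z + 1 - 1, show z + 1 - 1 < n by omega⟩ : Fin n) = ⟨z, by omega⟩ :=
          Fin.ext (show z + 1 - 1 = z by omega)
        rw [heq] at h5
        have hb := hbd ⟨z, by omega⟩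
        simp only [Fin.val_mk] at hb
        have hnl := hi0min z (by omega) hz (by omega)
        have heq2 : (⟨z, show z < n by omega⟩ : Fin n) = ⟨z, by omega⟩ := rfl
        omega
    apply le_antisymm (Nat.sInf_le hmem)
    by_contra hcon
    push_neg at hcon
    exact hmin _ hcon (Nat.sInf_mem ⟨i0, hmem⟩)
  have hcomp : Phi m n j (Psi m n j p) = p := by
    funext i
    simp only [Phi]
    rw [hlast, hinsq]
    rcases lt_or_ge (i : ℕ) e with h1 | h1
    · rw [if_pos h1]
      exact hQ1 i h1
    rcases lt_or_ge (i : ℕ) i0 with h2 | h2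
    · have hx1 : (i : ℕ) + 1 < n := by omega
      rw [if_neg (by omega), if_pos h2, dif_pos hx1]
      rw [hQ3 ⟨(i : ℕ) + 1, hx1⟩ (show (i : ℕ) + 1 - 1 < n by omega)
        (by simp only [Fin.val_mk]; omega) (by simp only [Fin.val_mk]; omega)]
      have heq : (⟨(i : ℕ) + 1 - 1, show (i : ℕ) + 1 - 1 < n by omega⟩ : Fin n) = i :=
        Fin.ext (show (i : ℕ) + 1 - 1 = (i : ℕ) by omega)
      rw [heq]
    rcases eq_or_lt_of_le h2 with h3 | h3
    · rw [if_neg (by omega), if_neg (by omega), if_pos h3.symm]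
      have heq : i = (⟨i0, hi0n⟩ : Fin n) := Fin.ext h3.symm
      rw [heq, hi0l]
    · rw [if_neg (by omega), if_neg (by omega), if_neg (by omega)]
      exact hQ4 i h3
  exact ⟨hmono', hbd', hluck', hfreqj, hfreqo, hcomp⟩

lemma move_card (m n j : ℕ) (hm : 1 ≤ m) (hj1 : 1 ≤ j) (hjm : j ≤ m)
    (κ0 w : ℕ) (hκ0 : 1 ≤ κ0) (hw : j = 1 → 1 ≤ w) (F : ℕ → ℕ) :
    ((PK m n).filter (fun p => luck m p = κ0 ∧ freq j p = w + 1 ∧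
        ∀ c, 1 ≤ c → c ≤ m → c ≠ j → freq c p = F c)).card =
    ((PK m n).filter (fun p => luck m p = κ0 + 1 ∧ freq j p = w ∧
        ∀ c, 1 ≤ c → c ≤ m → c ≠ j → freq c p = F c)).card := by
  apply Finset.card_bij' (fun p _ => Phi m n j p) (fun p _ => Psi m n j p)
  · intro p hp
    simp only [Finset.mem_filter] at hp ⊢
    obtain ⟨hpk, hlk, hfj, hof⟩ := hp
    rw [mem_PK] at hpk
    have hspec := phi_spec m n j hm hj1 hjm p hpk.1 hpk.2 (by omega)
      (by rcases Nat.lt_or_ge j 2 with h | h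
          · left; have : j = 1 := by omega
            subst this; have := hw rfl; omega
          · right; exact h)
    obtain ⟨h1, h2, h3, h4, h5, h6⟩ := hspec
    refine ⟨mem_PK.mpr ⟨h1, h2⟩, by omega, by omega, ?_⟩
    intro c hc1 hcm hcj
    rw [h5 c hcj hcm]; exact hof c hc1 hcm hcj
  · intro p hp
    simp only [Finset.mem_filter] at hp ⊢
    obtain ⟨hpk, hlk, hfj, hof⟩ := hp
    rw [mem_PK] at hpk
    have hspec := psi_spec m n j hm hj1 hjm p hpk.1 hpk.2 (by omega)
    obtain ⟨h1, h2, h3, h4, h5, h6⟩ := hspec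
    refine ⟨mem_PK.mpr ⟨h1, h2⟩, by omega, by omega, ?_⟩
    intro c hc1 hcm hcj
    rw [h5 c hcj hcm]; exact hof c hc1 hcm hcj
  · intro p hp
    simp only [Finset.mem_filter] at hp
    obtain ⟨hpk, hlk, hfj, hof⟩ := hp
    rw [mem_PK] at hpk
    exact (phi_spec m n j hm hj1 hjm p hpk.1 hpk.2 (by omega)
      (by rcases Nat.lt_or_ge j 2 with h | h
          · left; have : j = 1 := by omega
            subst this; have := hw rfl; omega
          · right; exact h)).2.2.2.2.2
  · intro p hp
    simp only [Finset.mem_filter] at hp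
    obtain ⟨hpk, hlk, hfj, hof⟩ := hp
    rw [mem_PK] at hpk
    exact (psi_spec m n j hm hj1 hjm p hpk.1 hpk.2 (by omega)).2.2.2.2.2

def Ncard (m n : ℕ) (κ : ℕ → ℕ) : ℕ :=
  ((PK m n).filter (fun p => luck m p = κ 0 ∧ ∀ c, 1 ≤ c → c ≤ m → freq c p = κ c)).card

lemma Ncard_congr (m n : ℕ) (κ κ' : ℕ → ℕ) (h : ∀ c, c ≤ m → κ c = κ' c) :
    Ncard m n κ = Ncard m n κ' := by
  unfold Ncard
  congr 1
  ext p
  simp only [Finset.mem_filter]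
  constructor
  · rintro ⟨hp, h0, hr⟩
    exact ⟨hp, (h 0 (by omega)) ▸ h0, fun c hc1 hcm => (h c hcm) ▸ hr c hc1 hcm⟩
  · rintro ⟨hp, h0, hr⟩
    exact ⟨hp, (h 0 (by omega)).symm ▸ h0, fun c hc1 hcm => (h c hcm).symm ▸ hr c hc1 hcm⟩

lemma Ncard_move (m n j : ℕ) (hm : 1 ≤ m) (hj1 : 1 ≤ j) (hjm : j ≤ m)
    (κ : ℕ → ℕ) (h0 : 1 ≤ κ 0) (hjw : 1 ≤ κ j) (hj1w : j = 1 → 2 ≤ κ 1) :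
    Ncard m n κ =
      Ncard m n (fun c => if c = 0 then κ 0 + 1 else if c = j then κ j - 1 else κ c) := by
  unfold Ncard
  have e1 : ((PK m n).filter (fun p => luck m p = κ 0 ∧ ∀ c, 1 ≤ c → c ≤ m → freq c p = κ c))
      = ((PK m n).filter (fun p => luck m p = κ 0 ∧ freq j p = (κ j - 1) + 1 ∧
          ∀ c, 1 ≤ c → c ≤ m → c ≠ j → freq c p = κ c)) := by
    ext p
    simp only [Finset.mem_filter]
    constructor
    · rintro ⟨hp, ha, hb⟩
      exact ⟨hp, ha, by rw [hb j hj1 hjm]; omega, fun c hc1 hcm _ => hb c hc1 hcm⟩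
    · rintro ⟨hp, ha, hb, hc⟩
      refine ⟨hp, ha, fun c hc1 hcm => ?_⟩
      rcases eq_or_ne c j with h | h
      · subst h; omega
      · exact hc c hc1 hcm h
  have e2 : ((PK m n).filter (fun p => luck m p = (fun c => if c = 0 then κ 0 + 1
        else if c = j then κ j - 1 else κ c) 0 ∧ ∀ c, 1 ≤ c → c ≤ m → freq c p =
        (fun c => if c = 0 then κ 0 + 1 else if c = j then κ j - 1 else κ c) c))
      = ((PK m n).filter (fun p => luck m p = κ 0 + 1 ∧ freq j p = κ j - 1 ∧
          ∀ c, 1 ≤ c → c ≤ m → c ≠ j → freq c p = κ c)) := by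
    ext p
    simp only [Finset.mem_filter, if_pos rfl]
    constructor
    · rintro ⟨hp, ha, hb⟩
      refine ⟨hp, ha, ?_, fun c hc1 hcm hcj => ?_⟩
      · have := hb j hj1 hjm
        rw [if_neg (by omega), if_pos rfl] at this; exact this
      · have := hb c hc1 hcm
        rw [if_neg (by omega), if_neg hcj] at this; exact this
    · rintro ⟨hp, ha, hb, hc⟩
      refine ⟨hp, ha, fun c hc1 hcm => ?_⟩
      rw [if_neg (by omega)]
      rcases eq_or_ne c j with h | h
      · subst h; rw [if_pos rfl]; exact hb
      · rw [if_neg h]; exact hc c hc1 hcm h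
  rw [e1, e2]
  exact move_card m n j hm hj1 hjm (κ 0) (κ j - 1) h0
    (fun hj => by have := hj1w hj; subst hj; omega) κ

lemma toNormal (m n : ℕ) (hm : 1 ≤ m) :
    ∀ E κ, 1 ≤ κ 0 → 1 ≤ κ 1 → (κ 1 - 1) + (∑ c ∈ Finset.Icc 2 m, κ c) = E →
      Ncard m n κ = Ncard m n (fun c => if c = 0 then κ 0 + E else if c = 1 then 1 else 0) := by
  intro E
  induction E with
  | zero =>
    intro κ h0 h1 hE
    apply Ncard_congr
    intro c hcm
    have hsum0 : ∀ c ∈ Finset.Icc 2 m, κ c = 0 := by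
      intro c hc
      have h : ∑ c ∈ Finset.Icc 2 m, κ c = 0 := by omega
      exact Finset.sum_eq_zero_iff.mp h c hc
    rcases Nat.eq_zero_or_pos c with h | h
    · subst h; simp
    rcases Nat.lt_or_ge c 2 with h2 | h2
    · have : c = 1 := by omega
      subst this; simp; omega
    · rw [if_neg (by omega), if_neg (by omega)]
      exact hsum0 c (Finset.mem_Icc.mpr ⟨h2, hcm⟩)
  | succ E ih =>
    intro κ h0 h1 hE
    rcases Nat.lt_or_ge (κ 1) 2 with hκ1 | hκ1
    · -- κ 1 = 1, find c in [2,m] with κ c ≥ 1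
      have h11 : κ 1 = 1 := by omega
      have hpos : 0 < ∑ c ∈ Finset.Icc 2 m, κ c := by omega
      have hex : ∃ c ∈ Finset.Icc 2 m, 0 < κ c := by
        by_contra hcon
        push_neg at hcon
        have h : ∑ c ∈ Finset.Icc 2 m, κ c = 0 :=
          Finset.sum_eq_zero (fun c hc => by have := hcon c hc; omega)
        omega
      obtain ⟨c₀, hc₀m, hc₀⟩ := hex
      rw [Finset.mem_Icc] at hc₀m
      set κ' := fun c => if c = 0 then κ 0 + 1 else if c = c₀ then κ c₀ - 1 else κ c with hκ'
      have hmove := Ncard_move m n c₀ hm (by omega) hc₀m.2 κ h0 (by omega) (by omega)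
      rw [hmove]
      have hagree : ∀ x ∈ (Finset.Icc 2 m).erase c₀, κ' x = κ x := by
        intro x hx
        rw [Finset.mem_erase, Finset.mem_Icc] at hx
        show (if x = 0 then κ 0 + 1 else if x = c₀ then κ c₀ - 1 else κ x) = κ x
        rw [if_neg (by omega), if_neg hx.1]
      have hv : κ' c₀ = κ c₀ - 1 := by
        show (if c₀ = 0 then κ 0 + 1 else if c₀ = c₀ then κ c₀ - 1 else κ c₀) = κ c₀ - 1
        rw [if_neg (by omega), if_pos rfl]
      have hv0 : κ' 0 = κ 0 + 1 := by
        show (if (0:ℕ) = 0 then κ 0 + 1 else if (0:ℕ) = c₀ then κ c₀ - 1 else κ 0) = κ 0 + 1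
        rw [if_pos rfl]
      have hv1 : κ' 1 = κ 1 := by
        show (if (1:ℕ) = 0 then κ 0 + 1 else if (1:ℕ) = c₀ then κ c₀ - 1 else κ 1) = κ 1
        rw [if_neg (by omega), if_neg (by omega)]
      have hsum' : (∑ c ∈ Finset.Icc 2 m, κ' c) + 1 = ∑ c ∈ Finset.Icc 2 m, κ c := by
        have hmem : c₀ ∈ Finset.Icc 2 m := Finset.mem_Icc.mpr hc₀m
        have h2 : ∑ x ∈ (Finset.Icc 2 m).erase c₀, κ' x
            = ∑ x ∈ (Finset.Icc 2 m).erase c₀, κ x := Finset.sum_congr rfl hagree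
        rw [← Finset.add_sum_erase _ κ' hmem, ← Finset.add_sum_erase _ κ hmem, h2, hv]
        omega
      have hih := ih κ' (by omega) (by omega) (by omega)
      rw [hih]
      apply Ncard_congr
      intro c hcm
      split_ifs <;> omega
    · -- move on coordinate 1
      have hmove := Ncard_move m n 1 hm le_rfl hm κ h0 (by omega) (fun _ => hκ1)
      rw [hmove]
      set κ' := fun c => if c = 0 then κ 0 + 1 else if c = 1 then κ 1 - 1 else κ c with hκ'
      have hv0 : κ' 0 = κ 0 + 1 := by
        show (if (0:ℕ) = 0 then κ 0 + 1 else if (0:ℕ) = 1 then κ 1 - 1 else κ 0) = κ 0 + 1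
        rw [if_pos rfl]
      have hv1 : κ' 1 = κ 1 - 1 := by
        show (if (1:ℕ) = 0 then κ 0 + 1 else if (1:ℕ) = 1 then κ 1 - 1 else κ 1) = κ 1 - 1
        rw [if_neg (by omega), if_pos rfl]
      have hsum' : ∑ c ∈ Finset.Icc 2 m, κ' c = ∑ c ∈ Finset.Icc 2 m, κ c := by
        apply Finset.sum_congr rfl
        intro x hx
        rw [Finset.mem_Icc] at hx
        show (if x = 0 then κ 0 + 1 else if x = 1 then κ 1 - 1 else κ x) = κ x
        rw [if_neg (by omega), if_neg (by omega)]
      have hih := ih κ' (by omega) (by omega) (by omega)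
      rw [hih]
      apply Ncard_congr
      intro c hcm
      split_ifs <;> omega

theorem stmt18 (m : ℕ) (hm : 1 ≤ m) (n : ℕ) (hn : 1 ≤ n)
    (k l : Fin (m + 1) → ℕ) (hk : ∀ i, 1 ≤ k i) (hl : ∀ i, 1 ≤ l i)
    (hsum : ∑ i, k i = ∑ i, l i) :
    ((PK m n).filter (fun p => luck m p = k 0 ∧ freq 1 p = k 1 ∧
        ∀ j : Fin (m + 1), 2 ≤ (j : ℕ) → freq (j : ℕ) p = k j - 1)).card =
      ((PK m n).filter (fun p => luck m p = l 0 ∧ freq 1 p = l 1 ∧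
        ∀ j : Fin (m + 1), 2 ≤ (j : ℕ) → freq (j : ℕ) p = l j - 1)).card := by
  have hval1 : ((1 : Fin (m + 1)) : ℕ) = 1 := by
    have h : ((1 : Fin (m + 1)) : ℕ) = 1 % (m + 1) := rfl
    rw [h]; exact Nat.mod_eq_of_lt (by omega)
  have hval0 : ((0 : Fin (m + 1)) : ℕ) = 0 := rfl
  -- generic conversion of the fiber to `Ncard`
  have hfiber : ∀ (kk : Fin (m + 1) → ℕ),
      ((PK m n).filter (fun p => luck m p = kk 0 ∧ freq 1 p = kk 1 ∧
        ∀ j : Fin (m + 1), 2 ≤ (j : ℕ) → freq (j : ℕ) p = kk j - 1)).card =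
      Ncard m n (fun c => if c = 0 then kk 0 else if c = 1 then kk 1
        else if h : c < m + 1 then kk ⟨c, h⟩ - 1 else 0) := by
    intro kk
    unfold Ncard
    congr 1
    ext p
    simp only [Finset.mem_filter]
    constructor
    · rintro ⟨hp, ha, hb, hc⟩
      refine ⟨hp, by simpa using ha, ?_⟩
      intro c hc1 hcm
      rcases eq_or_ne c 1 with rfl | hne
      · simpa using hb
      · have hc2 : 2 ≤ c := by omega
        rw [if_neg (by omega), if_neg hne, dif_pos (by omega)]
        have := hc ⟨c, by omega⟩ hc2
        exact this
    · rintro ⟨hp, ha, hb⟩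
      refine ⟨hp, by simpa using ha, ?_, ?_⟩
      · have := hb 1 le_rfl hm
        simpa using this
      · intro jj hjj
        have hjm' : (jj : ℕ) ≤ m := by have := jj.isLt; omega
        have := hb (jj : ℕ) (by omega) hjm'
        rw [if_neg (by omega), if_neg (by omega), dif_pos jj.isLt] at this
        have hj : (⟨(jj : ℕ), jj.isLt⟩ : Fin (m + 1)) = jj := Fin.ext rfl
        rw [hj] at this
        exact this
  rw [hfiber k, hfiber l]
  set κk : ℕ → ℕ := fun c => if c = 0 then k 0 else if c = 1 then k 1
    else if h : c < m + 1 then k ⟨c, h⟩ - 1 else 0 with hκk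
  set κl : ℕ → ℕ := fun c => if c = 0 then l 0 else if c = 1 then l 1
    else if h : c < m + 1 then l ⟨c, h⟩ - 1 else 0 with hκl
  have hκk0 : κk 0 = k 0 := by simp [hκk]
  have hκk1 : κk 1 = k 1 := by simp [hκk]
  have hκl0 : κl 0 = l 0 := by simp [hκl]
  have hκl1 : κl 1 = l 1 := by simp [hκl]
  -- sum computations
  have hsplit : Finset.range (m + 1) = insert 0 (insert 1 (Finset.Icc 2 m)) := by
    ext x
    simp only [Finset.mem_range, Finset.mem_insert, Finset.mem_Icc]
    omega
  have hsumExpand : ∀ (kk : Fin (m + 1) → ℕ),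
      ∑ i, kk i = kk 0 + (kk 1 + ∑ c ∈ Finset.Icc 2 m,
        (if h : c < m + 1 then kk ⟨c, h⟩ else 0)) := by
    intro kk
    have h1 : ∑ i, kk i = ∑ i : Fin (m + 1), (if h : (i : ℕ) < m + 1 then kk ⟨(i : ℕ), h⟩ else 0) :=
      Finset.sum_congr rfl (fun i _ => by rw [dif_pos i.isLt])
    have h2 : ∑ i : Fin (m + 1), (if h : (i : ℕ) < m + 1 then kk ⟨(i : ℕ), h⟩ else 0)
        = ∑ c ∈ Finset.range (m + 1), (if h : c < m + 1 then kk ⟨c, h⟩ else 0) := by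
      exact Fin.sum_univ_eq_sum_range (fun c => if h : c < m + 1 then kk ⟨c, h⟩ else 0) (m + 1)
    have h0v : (if h : (0:ℕ) < m + 1 then kk ⟨0, h⟩ else 0) = kk 0 := by
      rw [dif_pos (by omega : (0:ℕ) < m + 1)]
      exact congrArg kk (Fin.ext hval0.symm)
    have h1v : (if h : (1:ℕ) < m + 1 then kk ⟨1, h⟩ else 0) = kk 1 := by
      rw [dif_pos (by omega : (1:ℕ) < m + 1)]
      exact congrArg kk (Fin.ext hval1.symm)
    rw [h1, h2, hsplit, Finset.sum_insert (by simp), Finset.sum_insert (by simp), h0v, h1v]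
  have hIccCard : ∑ _c ∈ Finset.Icc 2 m, (1 : ℕ) = m - 1 := by
    rw [Finset.sum_const, Nat.card_Icc, smul_eq_mul, mul_one]
    omega
  have hshift : ∀ (kk : Fin (m + 1) → ℕ) (κ : ℕ → ℕ),
      (κ = fun c => if c = 0 then kk 0 else if c = 1 then kk 1
        else if h : c < m + 1 then kk ⟨c, h⟩ - 1 else 0) → (∀ i, 1 ≤ kk i) →
      (∑ c ∈ Finset.Icc 2 m, κ c) + ∑ _c ∈ Finset.Icc 2 m, (1 : ℕ)
        = ∑ c ∈ Finset.Icc 2 m, (if h : c < m + 1 then kk ⟨c, h⟩ else 0) := by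
    intro kk κ hκ hkk
    rw [← Finset.sum_add_distrib]
    apply Finset.sum_congr rfl
    intro c hc
    rw [Finset.mem_Icc] at hc
    have h' : c < m + 1 := by omega
    have h1c : 1 ≤ kk ⟨c, h'⟩ := hkk _
    have hκc : κ c = kk ⟨c, h'⟩ - 1 := by
      rw [hκ]
      show (if c = 0 then kk 0 else if c = 1 then kk 1
        else if h : c < m + 1 then kk ⟨c, h⟩ - 1 else 0) = _
      rw [if_neg (by omega), if_neg (by omega), dif_pos h']
    rw [hκc, dif_pos h']
    omega
  have hEk := hshift k κk hκk hk
  have hEl := hshift l κl hκl hl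
  have hSk := hsumExpand k
  have hSl := hsumExpand l
  -- apply normalization
  rw [toNormal m n hm ((κk 1 - 1) + ∑ c ∈ Finset.Icc 2 m, κk c) κk
    (by rw [hκk0]; exact hk 0) (by rw [hκk1]; exact hk 1) rfl]
  rw [toNormal m n hm ((κl 1 - 1) + ∑ c ∈ Finset.Icc 2 m, κl c) κl
    (by rw [hκl0]; exact hl 0) (by rw [hκl1]; exact hl 1) rfl]
  apply Ncard_congr
  intro c _
  have hk1' : 1 ≤ k 1 := hk 1
  have hl1' : 1 ≤ l 1 := hl 1
  have key : κk 0 + ((κk 1 - 1) + ∑ c ∈ Finset.Icc 2 m, κk c)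
      = κl 0 + ((κl 1 - 1) + ∑ c ∈ Finset.Icc 2 m, κl c) := by omega
  rcases eq_or_ne c 0 with rfl | hc0
  · rw [if_pos rfl, if_pos rfl, key]
  · rw [if_neg hc0, if_neg hc0]

end
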